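/- Let E be a row-finite graph and c = c₁⋯c_n a cycle of length n with no exit. Then in M_E^{gr}, the element a = Σ_{i=1}^n r(c_i)(0) satisfies ^1 a = a, and each vertex v on the cycle satisfies ^n v = v (where v denotes v(0)). -/

import Mathlib

set_option linter.unusedSectionVars false

/-- The algebraic preorder on a commutative monoid: `a ≤ b` iff `b = a + c` for some `c`. -/
def algLE {M : Type*} [AddCommMonoid M] (a b : M) : Prop := ∃ c, b = a + c

/-- A row-finite directed graph: vertices `V`, edges `Ed`, source `s`, range `r`,
and for each vertex the (finite) set of edges it emits. -/
structure RFGraph (V : Type) (Ed : Type) where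
  s : Ed → V
  r : Ed → V
  emit : V → Finset Ed
  mem_emit : ∀ e v, e ∈ emit v ↔ s e = v

namespace RFGraph

variable {V Ed : Type} [DecidableEq V] (G : RFGraph V Ed)

/-- The one-step rewriting relation `→₁` on the free commutative monoid `Multiset V`:
replace one occurrence of a non-sink vertex `v` by the sum of ranges of edges emitted by `v`. -/
def Step1 (a b : Multiset V) : Prop :=
  ∃ v : V, v ∈ a ∧ G.emit v ≠ ∅ ∧ b = a.erase v + (G.emit v).val.map G.r

/-- The reflexive-transitive closure `→` of `→₁`. -/
def Step : Multiset V → Multiset V → Prop := Relation.ReflTransGen G.Step1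

/-- The congruence on the free commutative monoid generated by `→₁`. -/
def gcon : AddCon (Multiset V) := addConGen G.Step1

/-- The graph monoid `M_E`. -/
def GM := G.gcon.Quotient

instance : AddCommMonoid G.GM := inferInstanceAs (AddCommMonoid G.gcon.Quotient)

/-- One-step rewriting for the talented monoid: replace `v(i)` by `Σ_{e ∈ s⁻¹(v)} r(e)(i+1)`. -/
def TStep1 (a b : Multiset (V × ℤ)) : Prop :=
  ∃ (v : V) (i : ℤ), (v, i) ∈ a ∧ G.emit v ≠ ∅ ∧
    b = a.erase (v, i) + (G.emit v).val.map (fun e => (G.r e, i + 1))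

/-- The congruence generated by the talented one-step relation. -/
def tcon : AddCon (Multiset (V × ℤ)) := addConGen G.TStep1

/-- The talented monoid `M_E^{gr}`. -/
def TM := G.tcon.Quotient

instance : AddCommMonoid G.TM := inferInstanceAs (AddCommMonoid G.tcon.Quotient)

/-- The generator `v(i)` of the talented monoid. -/
def tgen (v : V) (i : ℤ) : G.TM := G.tcon.mk' {(v, i)}

/-- The shift `v(i) ↦ v(i+n)` on the free commutative monoid `Multiset (V × ℤ)`. -/
def shiftMul (n : ℤ) : Multiset (V × ℤ) →+ Multiset (V × ℤ) where
  toFun a := a.map fun p => (p.1, p.2 + n)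
  map_zero' := rfl
  map_add' a b := Multiset.map_add (fun p => (p.1, p.2 + n)) a b

lemma shift_inj (n : ℤ) : Function.Injective (fun p : V × ℤ => (p.1, p.2 + n)) := by
  rintro ⟨a, b⟩ ⟨c, d⟩ h
  simp only [Prod.mk.injEq] at h
  exact Prod.ext h.1 (by omega)

lemma tstep1_shift (n : ℤ) {a b : Multiset (V × ℤ)} (h : G.TStep1 a b) :
    G.TStep1 (shiftMul n a) (shiftMul n b) := by
  obtain ⟨v, i, hv, hne, rfl⟩ := h
  refine ⟨v, i + n, Multiset.mem_map.2 ⟨(v, i), hv, rfl⟩, hne, ?_⟩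
  show Multiset.map _ _ = _
  rw [Multiset.map_add]
  congr 1
  · exact (Multiset.map_erase _ (shift_inj n) (v, i) a)
  · rw [Multiset.map_map]
    congr 1
    funext e
    simp only [Function.comp_apply]
    congr 1
    omega

lemma tcon_shift (n : ℤ) {a b : Multiset (V × ℤ)} (h : G.tcon a b) :
    G.tcon (shiftMul n a) (shiftMul n b) := by
  have hle : addConGen G.TStep1 ≤
      { r := fun a b => G.tcon (shiftMul n a) (shiftMul n b)
        iseqv := ⟨fun _ => G.tcon.refl _, fun h => G.tcon.symm h,
          fun h₁ h₂ => G.tcon.trans h₁ h₂⟩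
        add' := fun h₁ h₂ => by
          simpa only [map_add] using G.tcon.add h₁ h₂ } := by
    refine AddCon.addConGen_le.2 fun x y hxy => ?_
    exact AddConGen.Rel.of _ _ (G.tstep1_shift n hxy)
  exact hle h

/-- The `ℤ`-action on the talented monoid, `ⁿ(v(i)) = v(i+n)`. -/
def tshift (n : ℤ) : G.TM →+ G.TM :=
  G.tcon.lift (G.tcon.mk'.comp (shiftMul n)) (by
    intro a b h
    show G.tcon.mk' (shiftMul n a) = G.tcon.mk' (shiftMul n b)
    exact (AddCon.eq _).2 (G.tcon_shift n h))

/-- Reachability: there is a (possibly trivial) path from `u` to `v`. -/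
def Reaches (u v : V) : Prop :=
  Relation.ReflTransGen (fun a b => ∃ e : Ed, G.s e = a ∧ G.r e = b) u v

/-- A cycle: a nonempty path of edges, closed up, with distinct source vertices. -/
def IsCycle (p : List Ed) : Prop :=
  ∃ h : p ≠ [], List.Chain' (fun e f => G.r e = G.s f) p ∧
    G.r (p.getLast h) = G.s (p.head h) ∧ (p.map G.s).Nodup

/-- The cycle `p` has an exit: some vertex on it emits an edge not on the cycle. -/
def HasExit (p : List Ed) : Prop :=
  ∃ e : Ed, (∃ f ∈ p, G.s e = G.s f) ∧ e ∉ p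

/-- The cycle `p` has no exit: every vertex on it emits exactly its cycle edge. -/
def NoExit (p : List Ed) : Prop :=
  ∀ e ∈ p, G.emit (G.s e) = {e}

/-- `ℤ`-order-ideals of the talented monoid. -/
def IsOrderIdeal (I : Set G.TM) : Prop :=
  (0 : G.TM) ∈ I ∧ (∀ a b : G.TM, a ∈ I → b ∈ I → a + b ∈ I) ∧
    (∀ (n : ℤ) (a : G.TM), a ∈ I → G.tshift n a ∈ I) ∧
    (∀ a b : G.TM, algLE a b → b ∈ I → a ∈ I)

/-- The smallest `ℤ`-order-ideal of `M_E^{gr}` containing `v(0)`. -/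
def genIdeal (v : V) : Set G.TM :=
  ⋂₀ {I : Set G.TM | G.IsOrderIdeal I ∧ G.tgen v 0 ∈ I}

/-- Minimality in the talented monoid: `0 ≠ b ≤ a` implies `a ≤ b`. -/
def TMin (a : G.TM) : Prop := ∀ b : G.TM, b ≠ 0 → algLE b a → algLE a b

/-- The covering graph `\bar E`. -/
def cover : RFGraph (V × ℤ) (Ed × ℤ) where
  s p := (G.s p.1, p.2)
  r p := (G.r p.1, p.2 + 1)
  emit p := (G.emit p.1).map ⟨fun e => (e, p.2), fun a b h => by
    simpa using congrArg Prod.fst h⟩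
  mem_emit := by
    rintro ⟨e, n⟩ ⟨v, m⟩
    simp only [Finset.mem_map, Function.Embedding.coeFn_mk, Prod.mk.injEq, G.mem_emit]
    constructor
    · rintro ⟨a, ha, rfl, rfl⟩; exact ⟨ha, rfl⟩
    · rintro ⟨rfl, rfl⟩; first | exact ⟨e, rfl, rfl, rfl⟩ | exact ⟨e, rfl, rfl⟩ | exact ⟨e, rfl, ⟨rfl, rfl⟩⟩ | simp

/-- The set of vertices on a cycle. -/
def cycVerts (p : List Ed) : Set V := {v | ∃ e ∈ p, G.s e = v}

/-- One step on a singleton: `v(i) = r(e)(i+1)` when `emit (s e) = {e}`. -/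
lemma mk'_single_step (e : Ed) (he : G.emit (G.s e) = {e}) (i : ℤ) :
    G.tcon.mk' ({(G.s e, i)} : Multiset (V × ℤ)) = G.tcon.mk' {(G.r e, i + 1)} := by
  refine (AddCon.eq _).2 (AddConGen.Rel.of _ _ ?_)
  refine ⟨G.s e, i, Multiset.mem_singleton_self _, by simp [he], ?_⟩
  simp [he]

/-- Iterating along a no-exit path. -/
lemma path_gen : ∀ (q : List Ed) (h : q ≠ []),
    List.Chain' (fun e f => G.r e = G.s f) q →
    (∀ e ∈ q, G.emit (G.s e) = {e}) →
    ∀ i : ℤ, G.tcon.mk' ({(G.s (q.head h), i)} : Multiset (V × ℤ)) =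
      G.tcon.mk' {(G.r (q.getLast h), i + q.length)} := by
  intro q
  induction q with
  | nil => simp
  | cons a t ih =>
    intro h hc hem i
    cases t with
    | nil => simpa using G.mk'_single_step a (hem a (by simp)) i
    | cons b t' =>
      have h1 := G.mk'_single_step a (hem a (by simp)) i
      have hra : G.r a = G.s b := (List.isChain_cons_cons.1 hc).1
      have h2 := ih (by simp) (List.isChain_cons_cons.1 hc).2
        (fun e he => hem e (List.mem_cons_of_mem _ he)) (i + 1)
      have hl : (a :: b :: t').getLast h = (b :: t').getLast (by simp) :=
        List.getLast_cons (by simp)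
      have harith : i + ((a :: b :: t').length : ℤ)
          = (i + 1) + ((b :: t').length : ℤ) := by
        simp only [List.length_cons]
        push_cast
        ring
      rw [List.head_cons] at h2
      rw [show (a :: b :: t').head h = a from rfl, hl, harith, h1, hra]
      exact h2

/-- Along a chain, the list of ranges is the tail of the sources followed by the last range. -/
lemma map_r_eq : ∀ (q : List Ed) (h : q ≠ []),
    List.Chain' (fun e f => G.r e = G.s f) q →
    q.map G.r = (q.map G.s).tail ++ [G.r (q.getLast h)] := by
  intro q
  induction q with
  | nil => simp
  | cons a t ih =>
    intro h hc
    cases t with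
    | nil => simp
    | cons b t' =>
      have hra : G.r a = G.s b := (List.isChain_cons_cons.1 hc).1
      have h2 := ih (by simp) (List.isChain_cons_cons.1 hc).2
      have hl : (a :: b :: t').getLast h = (b :: t').getLast (by simp) :=
        List.getLast_cons (by simp)
      rw [hl]
      simp only [List.map_cons, List.tail_cons] at h2 ⊢
      rw [hra, h2]
      simp

/-- Pointwise congruence of sums over a list. -/
lemma mk'_map_congr (l : List Ed) (g h' : Ed → V × ℤ)
    (H : ∀ e ∈ l, G.tcon.mk' ({g e} : Multiset (V × ℤ)) = G.tcon.mk' {h' e}) :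
    G.tcon.mk' ((l.map g : List (V × ℤ)) : Multiset (V × ℤ)) =
      G.tcon.mk' ((l.map h' : List (V × ℤ)) : Multiset (V × ℤ)) := by
  induction l with
  | nil => rfl
  | cons a t ih =>
    have e1 : ((List.map g (a :: t) : List (V × ℤ)) : Multiset (V × ℤ))
        = ({g a} : Multiset (V × ℤ)) + ↑(t.map g) := by
      simp [Multiset.singleton_add]
    have e2 : ((List.map h' (a :: t) : List (V × ℤ)) : Multiset (V × ℤ))
        = ({h' a} : Multiset (V × ℤ)) + ↑(t.map h') := by
      simp [Multiset.singleton_add]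
    rw [e1, e2, map_add, map_add, H a (by simp),
      ih (fun e he => H e (List.mem_cons_of_mem _ he))]

/-- `tshift` applied to `mk'`. -/
lemma tshift_mk' (n : ℤ) (m : Multiset (V × ℤ)) :
    G.tshift n (G.tcon.mk' m) = G.tcon.mk' (shiftMul n m) :=
  AddCon.lift_mk' _ m

/-- A vertex on a no-exit cycle is periodic. -/
lemma cyc_gen (p : List Ed) (hp : G.IsCycle p) (hne : G.NoExit p) :
    ∀ e ∈ p, ∀ i : ℤ, G.tcon.mk' ({(G.s e, i)} : Multiset (V × ℤ)) =
      G.tcon.mk' {(G.s e, i + p.length)} := by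
  obtain ⟨hnil, hchain, hclose, -⟩ := hp
  intro e he i
  obtain ⟨l₁, l₂, hpeq⟩ := List.append_of_mem he
  subst hpeq
  set q : List Ed := e :: (l₂ ++ l₁) with hq
  have hqne : q ≠ [] := by simp [hq]
  have hc := List.isChain_append.1 hchain
  have hqchain : List.Chain' (fun e f => G.r e = G.s f) q := by
    have : q = (e :: l₂) ++ l₁ := by simp [hq]
    rw [this]; refine List.isChain_append.2 ?_
    refine ⟨hc.2.1, hc.1, ?_⟩
    intro x hx y hy
    -- x = getLast (e :: l₂), y = head l₁ ; l₁ ≠ []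
    have hl₁ : l₁ ≠ [] := by rintro rfl; simp at hy
    have hx' : x = (e :: l₂).getLast (by simp) := by
      rwa [List.getLast?_eq_getLast (by simp), Option.mem_some_iff, eq_comm] at hx
    have hy' : y = l₁.head hl₁ := by
      rwa [List.head?_eq_head hl₁, Option.mem_some_iff, eq_comm] at hy
    have hgl : (l₁ ++ e :: l₂).getLast hnil = (e :: l₂).getLast (by simp) :=
      List.getLast_append_of_ne_nil _ (by simp)
    have hhd : (l₁ ++ e :: l₂).head hnil = l₁.head hl₁ := List.head_append_of_ne_nil _
    rw [hx', hy', ← hgl, ← hhd]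
    exact hclose
  have hqlast : G.r (q.getLast hqne) = G.s e := by
    rcases eq_or_ne l₁ [] with rfl | hl₁
    · have hcl := hclose
      simp only [List.nil_append] at hcl
      rw [show q.getLast hqne = (e :: l₂).getLast (by simp) from by simp [hq]]
      simpa using hcl
    · have hgl : q.getLast hqne = l₁.getLast hl₁ := by
        have : q = (e :: l₂) ++ l₁ := by simp [hq]
        rw [show q.getLast hqne = ((e :: l₂) ++ l₁).getLast (by simp [hl₁]) from by
          congr 1]
        exact List.getLast_append_of_ne_nil _ hl₁
      rw [hgl]
      have := hc.2.2 (l₁.getLast hl₁) (List.getLast?_eq_getLast hl₁ ▸ rfl) e rfl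
      exact this
  have hqem : ∀ f ∈ q, G.emit (G.s f) = {f} := by
    intro f hf
    apply hne
    rcases List.mem_cons.1 hf with rfl | hf'
    · exact he
    · rcases List.mem_append.1 hf' with h2 | h1
      · exact List.mem_append.2 (Or.inr (List.mem_cons_of_mem _ h2))
      · exact List.mem_append.2 (Or.inl h1)
  have key := G.path_gen q hqne hqchain hqem i
  rw [show q.head hqne = e from rfl, hqlast] at key
  have hlen : q.length = (l₁ ++ e :: l₂).length := by simp [hq]; omega
  rw [hlen] at key
  exact key

end RFGraph

/-- If `c = c₁⋯cₙ` is a cycle of length `n` with no exit, then in `M_E^{gr}` the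
element `a = Σᵢ r(cᵢ)(0)` satisfies `¹a = a`, and each vertex `v` on the cycle
satisfies `ⁿv = v`. -/
theorem cycle_no_exit_periodic {V Ed : Type} [DecidableEq V] (G : RFGraph V Ed)
    (p : List Ed) (hp : G.IsCycle p) (hne : G.NoExit p) :
    G.tshift 1 (G.tcon.mk' ((p.map fun e => (G.r e, (0 : ℤ))) : Multiset (V × ℤ))) =
        G.tcon.mk' ((p.map fun e => (G.r e, (0 : ℤ))) : Multiset (V × ℤ)) ∧
      ∀ e ∈ p, G.tshift (p.length : ℤ) (G.tgen (G.s e) 0) = G.tgen (G.s e) 0 := by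
  obtain ⟨hnil, hchain, hclose, hnd⟩ := hp
  constructor
  · -- part 1
    -- `p.map r` is a permutation of `p.map s`
    have hre : p.map G.r = (p.map G.s).tail ++ [G.s (p.head hnil)] := by
      rw [G.map_r_eq p hnil hchain, hclose]
    have hperm : (p.map G.r).Perm (p.map G.s) := by
      rw [hre]
      have := List.perm_append_singleton (G.s (p.head hnil)) ((p.map G.s).tail)
      refine this.trans ?_
      rw [show G.s (p.head hnil) = (p.map G.s).head (by simpa using hnil) from by
        rw [List.head_map]]
      rw [List.cons_head_tail]
    have hperm0 : ((p.map fun e => (G.r e, (0 : ℤ))) : Multiset (V × ℤ))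
        = ((p.map fun e => (G.s e, (0 : ℤ))) : Multiset (V × ℤ)) := by
      refine Multiset.coe_eq_coe.2 ?_
      have hmm : ∀ f : Ed → V, List.map (fun e => (f e, (0 : ℤ))) p
          = List.map (fun v => (v, (0 : ℤ))) (List.map f p) := fun f => by
        rw [List.map_map]; rfl
      rw [hmm, hmm]
      exact hperm.map _
    have hstep : G.tcon.mk' ((p.map fun e => (G.s e, (0 : ℤ))) : Multiset (V × ℤ))
        = G.tcon.mk' ((p.map fun e => (G.r e, (1 : ℤ))) : Multiset (V × ℤ)) := by
      refine G.mk'_map_congr p _ _ fun e he => ?_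
      simpa using G.mk'_single_step e (hne e he) 0
    have hsh : G.tshift 1 (G.tcon.mk' ((p.map fun e => (G.r e, (0 : ℤ))) : Multiset (V × ℤ)))
        = G.tcon.mk' ((p.map fun e => (G.r e, (1 : ℤ))) : Multiset (V × ℤ)) := by
      rw [G.tshift_mk']
      congr 1
      show Multiset.map (fun q : V × ℤ => (q.1, q.2 + 1)) ↑(p.map fun e => (G.r e, (0:ℤ)))
        = ↑(p.map fun e => (G.r e, (1:ℤ)))
      rw [Multiset.map_coe, List.map_map]
      rfl
    rw [hsh, hperm0, hstep]
  · -- part 2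
    intro e he
    have key := G.cyc_gen p ⟨hnil, hchain, hclose, hnd⟩ hne e he 0
    show G.tshift _ (G.tcon.mk' {(G.s e, 0)}) = G.tcon.mk' {(G.s e, 0)}
    rw [G.tshift_mk']
    have hsm : RFGraph.shiftMul (p.length : ℤ) ({(G.s e, 0)} : Multiset (V × ℤ))
        = {(G.s e, 0 + (p.length : ℤ))} := by
      show Multiset.map (fun q : V × ℤ => (q.1, q.2 + (p.length : ℤ))) {(G.s e, 0)}
        = {(G.s e, 0 + (p.length : ℤ))}
      simp
    rw [hsm, ← key]
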